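/- Let 0 = t₀ < t₁ < ⋯ < t_l be switching times, let σ assign to each interval [t_i, t_{i+1}) a mode, and suppose V : [0,∞) → ℝ is nonnegative, satisfies V(t) ≤ exp(-λ_{σ(t_i)}(t - t_i)) V(t_i) for all t ∈ [t_i, t_{i+1}), and satisfies the jump condition V(t_i) ≤ μ_i · lim_{t→t_i⁻} V(t) at each switching time t_i (i = 1,…,l), where each μ_i > 1 and each λ_p > 0. Then for all t ∈ [t_l, t_{l+1}), V(t) ≤ (∏_{k=1}^{l} μ_k) · exp(-λ_{σ(t_l)}(t - t_l) - ∑_{i=0}^{l-1} λ_{σ(t_i)}(t_{i+1} - t_i)) · V(0). -/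

import Mathlib

/-- Recursive multiplicative bound (eq. (17)) obtained by iterating per-interval exponential
decay and per-switch multiplicative jump bounds for a switched system. -/
theorem switched_recursive_bound {S : Type*} (l : ℕ)
    (t : ℕ → ℝ) (ht0 : t 0 = 0)
    (htmono : ∀ i, i ≤ l → t i < t (i + 1))
    (σm : ℕ → S) (lam : S → ℝ) (hlam : ∀ p, 0 < lam p)
    (μ : ℕ → ℝ) (hμ : ∀ i, 1 ≤ i → i ≤ l → 1 < μ i)
    (V : ℝ → ℝ) (hVnonneg : ∀ s, 0 ≤ V s)
    (hdecay : ∀ i, i ≤ l → ∀ s ∈ Set.Ico (t i) (t (i + 1)),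
      V s ≤ Real.exp (-(lam (σm i)) * (s - t i)) * V (t i))
    (Vleft : ℕ → ℝ)
    (hleft : ∀ i, 1 ≤ i → i ≤ l →
      Filter.Tendsto V (nhdsWithin (t i) (Set.Iio (t i))) (nhds (Vleft i)))
    (hjump : ∀ i, 1 ≤ i → i ≤ l → V (t i) ≤ μ i * Vleft i) :
    ∀ s ∈ Set.Ico (t l) (t (l + 1)),
      V s ≤ (∏ i ∈ Finset.Icc 1 l, μ i) *
        Real.exp (-(lam (σm l)) * (s - t l)
          - ∑ i ∈ Finset.range l, lam (σm i) * (t (i + 1) - t i)) * V 0 := by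
  induction l with
  | zero =>
    intro s hs
    simpa [ht0] using hdecay 0 le_rfl s hs
  | succ n ih =>
    -- inductive hypothesis with weakened bounds
    have IH := ih (fun i hi => htmono i (hi.trans (Nat.le_succ n)))
      (fun i h1 h2 => hμ i h1 (h2.trans (Nat.le_succ n)))
      (fun i hi => hdecay i (hi.trans (Nat.le_succ n)))
      (fun i h1 h2 => hleft i h1 (h2.trans (Nat.le_succ n)))
      (fun i h1 h2 => hjump i h1 (h2.trans (Nat.le_succ n)))
    set C := ∏ i ∈ Finset.Icc 1 n, μ i with hC
    set Sn := ∑ i ∈ Finset.range n, lam (σm i) * (t (i + 1) - t i) with hS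
    have htn : t n < t (n + 1) := htmono n (Nat.le_succ n)
    -- bound on Vleft (n+1)
    have hVleft : Vleft (n + 1) ≤
        C * Real.exp (-(lam (σm n)) * (t (n + 1) - t n) - Sn) * V 0 := by
      have hg : Filter.Tendsto
          (fun s => C * Real.exp (-(lam (σm n)) * (s - t n) - Sn) * V 0)
          (nhdsWithin (t (n + 1)) (Set.Iio (t (n + 1))))
          (nhds (C * Real.exp (-(lam (σm n)) * (t (n + 1) - t n) - Sn) * V 0)) := by
        apply Filter.Tendsto.mono_left _ nhdsWithin_le_nhds
        exact (Continuous.tendsto (by fun_prop) _)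
      refine le_of_tendsto_of_tendsto (hleft (n + 1) (Nat.succ_le_succ (Nat.zero_le n))
        le_rfl) hg ?_
      have hmem : Set.Ioo (t n) (t (n + 1)) ∈
          nhdsWithin (t (n + 1)) (Set.Iio (t (n + 1))) :=
        Ioo_mem_nhdsLT_of_mem ⟨htn, le_rfl⟩
      filter_upwards [hmem] with s hs
      exact IH s ⟨le_of_lt hs.1, hs.2⟩
    have hμpos : (0:ℝ) < μ (n + 1) :=
      lt_trans one_pos (hμ (n + 1) (Nat.succ_le_succ (Nat.zero_le n)) le_rfl)
    have hVt : V (t (n + 1)) ≤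
        μ (n + 1) * (C * Real.exp (-(lam (σm n)) * (t (n + 1) - t n) - Sn) * V 0) := by
      refine (hjump (n + 1) (Nat.succ_le_succ (Nat.zero_le n)) le_rfl).trans ?_
      exact mul_le_mul_of_nonneg_left hVleft (le_of_lt hμpos)
    intro s hs
    have hdec := hdecay (n + 1) le_rfl s hs
    have hexp : (0:ℝ) ≤ Real.exp (-(lam (σm (n + 1))) * (s - t (n + 1))) :=
      (Real.exp_pos _).le
    calc V s ≤ Real.exp (-(lam (σm (n + 1))) * (s - t (n + 1))) * V (t (n + 1)) := hdec
      _ ≤ Real.exp (-(lam (σm (n + 1))) * (s - t (n + 1))) *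
            (μ (n + 1) * (C * Real.exp (-(lam (σm n)) * (t (n + 1) - t n) - Sn) * V 0)) :=
          mul_le_mul_of_nonneg_left hVt hexp
      _ = (∏ i ∈ Finset.Icc 1 (n + 1), μ i) *
          Real.exp (-(lam (σm (n + 1))) * (s - t (n + 1))
            - ∑ i ∈ Finset.range (n + 1), lam (σm i) * (t (i + 1) - t i)) * V 0 := by
          rw [Finset.prod_Icc_succ_top (Nat.succ_le_succ (Nat.zero_le n)),
            Finset.sum_range_succ, ← hC, ← hS,
            show -(lam (σm (n + 1))) * (s - t (n + 1))
                - (Sn + lam (σm n) * (t (n + 1) - t n))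
              = (-(lam (σm (n + 1))) * (s - t (n + 1)))
                + (-(lam (σm n)) * (t (n + 1) - t n) - Sn) by ring,
            Real.exp_add]
          ring
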